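/- For every integer n ≥ 4, Sym_n((x_1 − x_2)^2 (x_3 − x_4)^2) = (8n^3/((n−1)(n−2)(n−3))) · ((1/2) p_{(1,1,1,1)}^{(n)} − p_{(2,1,1)}^{(n)} + ((n^2 − 3n + 3)/(2n^2)) p_{(2,2)}^{(n)} + ((2n−2)/n^2) p_{(3,1)}^{(n)} + ((1−n)/(2n^2)) p_{(4)}^{(n)}). -/

import Mathlib

open MvPolynomial

/-- The i-th normalized power sum `p_i^{(n)} = (1/n)(x_1^i + ⋯ + x_n^i)`. -/
noncomputable def psum (n i : ℕ) : MvPolynomial (Fin n) ℝ :=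
  C ((n : ℝ)⁻¹) * ∑ j : Fin n, X j ^ i

/-- The symmetrization `Sym_n(f) = (1/n!) Σ_{σ ∈ S_n} σ·f`. -/
noncomputable def symmetrize (n : ℕ) (f : MvPolynomial (Fin n) ℝ) :
    MvPolynomial (Fin n) ℝ :=
  C ((n.factorial : ℝ)⁻¹) * ∑ σ : Equiv.Perm (Fin n), rename (⇑σ) f

set_option maxHeartbeats 4000000

section Aux

lemma aux_exists_perm_four (n : ℕ) {a b c d i j k l : Fin n}
    (hab : a ≠ b) (hac : a ≠ c) (had : a ≠ d) (hbc : b ≠ c) (hbd : b ≠ d) (hcd : c ≠ d)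
    (hij : i ≠ j) (hik : i ≠ k) (hil : i ≠ l) (hjk : j ≠ k) (hjl : j ≠ l) (hkl : k ≠ l) :
    ∃ τ : Equiv.Perm (Fin n), τ a = i ∧ τ b = j ∧ τ c = k ∧ τ d = l := by
  classical
  set f : Fin n → Fin n := fun x =>
    if x = a then i else if x = b then j else if x = c then k else if x = d then l else x with hf
  have hfa : f a = i := by simp [hf]
  have hfb : f b = j := by simp [hf, hab.symm]
  have hfc : f c = k := by simp [hf, hac.symm, hbc.symm]
  have hfd : f d = l := by simp [hf, had.symm, hbd.symm, hcd.symm]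
  have hinj : Set.InjOn f (({a, b, c, d} : Finset (Fin n)) : Set (Fin n)) := by
    intro x hx y hy hxy
    simp only [Finset.coe_insert, Set.mem_insert_iff, Finset.coe_singleton,
      Set.mem_singleton_iff] at hx hy
    rcases hx with rfl | rfl | rfl | rfl <;> rcases hy with rfl | rfl | rfl | rfl <;> simp_all
  have hmaps : Finset.image f ({a, b, c, d} : Finset (Fin n)) ⊆ Finset.univ :=
    Finset.subset_univ _
  obtain ⟨g, hg⟩ := Finset.exists_equiv_extend_of_card_eq
    (by simp : Fintype.card (Fin n) = (Finset.univ : Finset (Fin n)).card) hmaps hinj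
  refine ⟨g.trans (Equiv.subtypeUnivEquiv (fun x => Finset.mem_univ x)), ?_, ?_, ?_, ?_⟩ <;>
    simp only [Equiv.trans_apply, Equiv.subtypeUnivEquiv_apply]
  · rw [hg a (by simp), hfa]
  · rw [hg b (by simp), hfb]
  · rw [hg c (by simp), hfc]
  · rw [hg d (by simp), hfd]

lemma aux_card_fix_four (n : ℕ) {a b c d : Fin n}
    (hab : a ≠ b) (hac : a ≠ c) (had : a ≠ d) (hbc : b ≠ c) (hbd : b ≠ d) (hcd : c ≠ d) :
    (Finset.univ.filter (fun σ : Equiv.Perm (Fin n) =>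
      σ a = a ∧ σ b = b ∧ σ c = c ∧ σ d = d)).card = (n - 4).factorial := by
  classical
  rw [← Fintype.card_subtype]
  have e1 : {σ : Equiv.Perm (Fin n) // σ a = a ∧ σ b = b ∧ σ c = c ∧ σ d = d}
      ≃ {σ : Equiv.Perm (Fin n) // ∀ x, ¬ (x ∉ ({a,b,c,d} : Finset (Fin n))) → σ x = x} :=
    Equiv.subtypeEquivRight (by
      intro σ
      constructor
      · rintro ⟨h1, h2, h3, h4⟩ x hx
        simp only [not_not, Finset.mem_insert, Finset.mem_singleton] at hx
        rcases hx with rfl | rfl | rfl | rfl <;> assumption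
      · intro h
        exact ⟨h a (by simp), h b (by simp), h c (by simp), h d (by simp)⟩)
  have e2 := (Equiv.Perm.subtypeEquivSubtypePerm
      (fun x => x ∉ ({a,b,c,d} : Finset (Fin n)))).symm
  rw [Fintype.card_congr (e1.trans e2)]
  rw [Fintype.card_perm]
  congr 1
  have hcard : ({a,b,c,d} : Finset (Fin n)).card = 4 := by
    rw [Finset.card_insert_of_notMem (by simp [hab, hac, had]),
        Finset.card_insert_of_notMem (by simp [hbc, hbd]),
        Finset.card_insert_of_notMem (by simp [hcd]), Finset.card_singleton]
  rw [Fintype.card_subtype_compl, Fintype.card_coe, hcard, Fintype.card_fin]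

lemma aux_card_fiber_four (n : ℕ) {a b c d i j k l : Fin n}
    (hab : a ≠ b) (hac : a ≠ c) (had : a ≠ d) (hbc : b ≠ c) (hbd : b ≠ d) (hcd : c ≠ d)
    (hij : i ≠ j) (hik : i ≠ k) (hil : i ≠ l) (hjk : j ≠ k) (hjl : j ≠ l) (hkl : k ≠ l) :
    (Finset.univ.filter (fun σ : Equiv.Perm (Fin n) =>
      σ a = i ∧ σ b = j ∧ σ c = k ∧ σ d = l)).card = (n - 4).factorial := by
  classical
  obtain ⟨τ, h1, h2, h3, h4⟩ :=
    aux_exists_perm_four n hab hac had hbc hbd hcd hij hik hil hjk hjl hkl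
  rw [← aux_card_fix_four n hab hac had hbc hbd hcd]
  refine Finset.card_bij' (fun σ _ => σ.trans τ.symm) (fun ρ _ => ρ.trans τ) ?_ ?_ ?_ ?_
  · intro σ hσ
    simp only [Finset.mem_filter, Finset.mem_univ, true_and] at hσ ⊢
    obtain ⟨g1, g2, g3, g4⟩ := hσ
    simp [Equiv.trans_apply, g1, g2, g3, g4, Equiv.symm_apply_eq, h1, h2, h3, h4]
  · intro ρ hρ
    simp only [Finset.mem_filter, Finset.mem_univ, true_and] at hρ ⊢
    obtain ⟨g1, g2, g3, g4⟩ := hρ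
    simp [Equiv.trans_apply, g1, g2, g3, g4, h1, h2, h3, h4]
  · intro σ _; ext x; simp
  · intro ρ _; ext x; simp

lemma aux_sum_poly4 {n : ℕ} (c0 c1 c2 c3 c4 : MvPolynomial (Fin n) ℝ) :
    ∑ j : Fin n, (c0 + c1 * X j + c2 * X j ^ 2 + c3 * X j ^ 3 + c4 * X j ^ 4)
      = C ((n : ℝ)) * c0 + c1 * (∑ j : Fin n, X j)
        + c2 * (∑ j : Fin n, X j ^ 2) + c3 * (∑ j : Fin n, X j ^ 3)
        + c4 * (∑ j : Fin n, X j ^ 4) := by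
  simp only [Finset.sum_add_distrib, ← Finset.mul_sum, Finset.sum_const, nsmul_eq_mul,
    Finset.card_univ, Fintype.card_fin, ← map_natCast (C : ℝ →+* MvPolynomial (Fin n) ℝ)]

lemma aux_sum_sq_pairs {n : ℕ} (U : Finset (Fin n)) :
    ∑ k ∈ U, ∑ l ∈ U, (X k - X l : MvPolynomial (Fin n) ℝ) ^ 2
      = 2 * (U.card : MvPolynomial (Fin n) ℝ) * (∑ k ∈ U, X k ^ 2)
        - 2 * (∑ k ∈ U, X k) ^ 2 := by
  have h1 : ∀ k, ∑ l ∈ U, (X k - X l : MvPolynomial (Fin n) ℝ) ^ 2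
      = (U.card : MvPolynomial (Fin n) ℝ) * X k ^ 2
        - 2 * X k * (∑ l ∈ U, X l) + (∑ l ∈ U, X l ^ 2) := by
    intro k
    simp only [sub_sq, Finset.sum_add_distrib, Finset.sum_sub_distrib, ← Finset.mul_sum,
      Finset.sum_const, nsmul_eq_mul]
  rw [Finset.sum_congr rfl (fun k _ => h1 k)]
  simp only [Finset.sum_add_distrib, Finset.sum_sub_distrib, ← Finset.mul_sum,
    ← Finset.sum_mul, Finset.sum_const, nsmul_eq_mul]
  ring

lemma aux_bigsum (n : ℕ) :
    ∑ i : Fin n, ∑ j : Fin n,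
      ((X i - X j : MvPolynomial (Fin n) ℝ) ^ 2 *
        ((C ((n : ℝ)) - 2) * 2 * ((∑ k : Fin n, X k ^ 2) - X i ^ 2 - X j ^ 2)
          - 2 * ((∑ k : Fin n, X k) - X i - X j) ^ 2))
    = 4 * (∑ k : Fin n, X k) ^ 4
      - C ((n : ℝ)) * 8 * ((∑ k : Fin n, X k ^ 2) * (∑ k : Fin n, X k) ^ 2)
      + (C ((n : ℝ)) ^ 2 * 4 - C ((n : ℝ)) * 12 + 12) * (∑ k : Fin n, X k ^ 2) ^ 2
      + (C ((n : ℝ)) * 16 - 16) * ((∑ k : Fin n, X k ^ 3) * (∑ k : Fin n, X k))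
      + (C ((n : ℝ)) * 4 - C ((n : ℝ)) ^ 2 * 4) * (∑ k : Fin n, X k ^ 4) := by
  set Cn : MvPolynomial (Fin n) ℝ := C ((n : ℝ)) with hCn
  set S1 : MvPolynomial (Fin n) ℝ := ∑ k : Fin n, X k with hS1
  set S2 : MvPolynomial (Fin n) ℝ := ∑ k : Fin n, X k ^ 2 with hS2
  set S3 : MvPolynomial (Fin n) ℝ := ∑ k : Fin n, X k ^ 3 with hS3
  set S4 : MvPolynomial (Fin n) ℝ := ∑ k : Fin n, X k ^ 4 with hS4
  have stage1 : ∀ i : Fin n, ∑ j : Fin n,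
      ((X i - X j : MvPolynomial (Fin n) ℝ) ^ 2 *
        ((Cn - 2) * 2 * (S2 - X i ^ 2 - X j ^ 2) - 2 * (S1 - X i - X j) ^ 2))
      = Cn * (X i ^ 2 * ((Cn * 2 - 4) * S2 - 2 * S1 ^ 2) + X i ^ 3 * (4 * S1)
            + X i ^ 4 * (2 - Cn * 2))
        + (X i * ((8 - Cn * 4) * S2 + 4 * S1 ^ 2) + X i ^ 2 * (-4 * S1)
            + X i ^ 3 * (Cn * 4 - 8)) * S1
        + (((Cn * 2 - 4) * S2 - 2 * S1 ^ 2) + X i * (-4 * S1)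
            + X i ^ 2 * (12 - Cn * 4)) * S2
        + (4 * S1 + X i * (Cn * 4 - 8)) * S3
        + (2 - Cn * 2) * S4 := by
    intro i
    rw [Finset.sum_congr rfl (fun j _ => by ring :
      ∀ j ∈ (Finset.univ : Finset (Fin n)),
        ((X i - X j : MvPolynomial (Fin n) ℝ) ^ 2 *
          ((Cn - 2) * 2 * (S2 - X i ^ 2 - X j ^ 2) - 2 * (S1 - X i - X j) ^ 2))
        = (X i ^ 2 * ((Cn * 2 - 4) * S2 - 2 * S1 ^ 2) + X i ^ 3 * (4 * S1)
              + X i ^ 4 * (2 - Cn * 2))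
          + (X i * ((8 - Cn * 4) * S2 + 4 * S1 ^ 2) + X i ^ 2 * (-4 * S1)
              + X i ^ 3 * (Cn * 4 - 8)) * X j
          + (((Cn * 2 - 4) * S2 - 2 * S1 ^ 2) + X i * (-4 * S1)
              + X i ^ 2 * (12 - Cn * 4)) * X j ^ 2
          + (4 * S1 + X i * (Cn * 4 - 8)) * X j ^ 3
          + (2 - Cn * 2) * X j ^ 4), aux_sum_poly4]
  rw [Finset.sum_congr rfl (fun i _ => stage1 i)]
  rw [Finset.sum_congr rfl (fun i _ => by ring :
    ∀ i ∈ (Finset.univ : Finset (Fin n)),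
      Cn * (X i ^ 2 * ((Cn * 2 - 4) * S2 - 2 * S1 ^ 2) + X i ^ 3 * (4 * S1)
            + X i ^ 4 * (2 - Cn * 2))
        + (X i * ((8 - Cn * 4) * S2 + 4 * S1 ^ 2) + X i ^ 2 * (-4 * S1)
            + X i ^ 3 * (Cn * 4 - 8)) * S1
        + (((Cn * 2 - 4) * S2 - 2 * S1 ^ 2) + X i * (-4 * S1)
            + X i ^ 2 * (12 - Cn * 4)) * S2
        + (4 * S1 + X i * (Cn * 4 - 8)) * S3
        + (2 - Cn * 2) * S4
      = (S2 * ((Cn * 2 - 4) * S2 - 2 * S1 ^ 2) + S3 * (4 * S1) + S4 * (2 - Cn * 2))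
        + (S1 * ((8 - Cn * 4) * S2 + 4 * S1 ^ 2) + S2 * (-4 * S1) + S3 * (Cn * 4 - 8)) * X i
        + (Cn * ((Cn * 2 - 4) * S2 - 2 * S1 ^ 2) + S1 * (-4 * S1) + S2 * (12 - Cn * 4)) * X i ^ 2
        + (Cn * (4 * S1) + S1 * (Cn * 4 - 8)) * X i ^ 3
        + (Cn * (2 - Cn * 2)) * X i ^ 4), aux_sum_poly4]
  ring

lemma aux_sum_Q (n : ℕ) (hn : 4 ≤ n) :
    ∑ t ∈ (Finset.univ.filter (fun t : (Fin n × Fin n) × Fin n × Fin n =>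
        t.1.1 ≠ t.1.2 ∧ t.1.1 ≠ t.2.1 ∧ t.1.1 ≠ t.2.2 ∧ t.1.2 ≠ t.2.1 ∧ t.1.2 ≠ t.2.2
          ∧ t.2.1 ≠ t.2.2)),
      ((X t.1.1 - X t.1.2 : MvPolynomial (Fin n) ℝ) ^ 2 * (X t.2.1 - X t.2.2) ^ 2)
    = ∑ i : Fin n, ∑ j : Fin n,
      ((X i - X j : MvPolynomial (Fin n) ℝ) ^ 2 *
        ((C ((n : ℝ)) - 2) * 2 * ((∑ k : Fin n, X k ^ 2) - X i ^ 2 - X j ^ 2)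
          - 2 * ((∑ k : Fin n, X k) - X i - X j) ^ 2)) := by
  classical
  have hsubQ : (Finset.univ.filter (fun t : (Fin n × Fin n) × Fin n × Fin n =>
        t.1.1 ≠ t.1.2 ∧ t.1.1 ≠ t.2.1 ∧ t.1.1 ≠ t.2.2 ∧ t.1.2 ≠ t.2.1 ∧ t.1.2 ≠ t.2.2
          ∧ t.2.1 ≠ t.2.2))
      ⊆ Finset.univ.filter (fun t : (Fin n × Fin n) × Fin n × Fin n =>
        t.2.1 ≠ t.1.1 ∧ t.2.1 ≠ t.1.2 ∧ t.2.2 ≠ t.1.1 ∧ t.2.2 ≠ t.1.2) := by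
    intro t ht
    simp only [Finset.mem_filter, Finset.mem_univ, true_and] at *
    obtain ⟨h12, h13, h14, h23, h24, h34⟩ := ht
    exact ⟨h13.symm, h23.symm, h14.symm, h24.symm⟩
  rw [Finset.sum_subset hsubQ
    (fun t ht hnt => by
      simp only [Finset.mem_filter, Finset.mem_univ, true_and] at ht hnt
      obtain ⟨h1, h2, h3, h4⟩ := ht
      have : t.1.1 = t.1.2 ∨ t.2.1 = t.2.2 := by tauto
      rcases this with h | h <;> rw [h] <;> simp)]
  rw [Finset.sum_finset_product _ Finset.univ
    (fun p => (Finset.univ \ {p.1, p.2}) ×ˢ (Finset.univ \ {p.1, p.2}))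
    (fun p => by
      simp only [Finset.mem_filter, Finset.mem_univ, true_and, Finset.mem_product,
        Finset.mem_sdiff, Finset.mem_insert, Finset.mem_singleton]
      tauto)]
  rw [Fintype.sum_prod_type]
  refine Finset.sum_congr rfl (fun i _ => Finset.sum_congr rfl (fun j _ => ?_))
  by_cases hij : i = j
  · subst hij; simp
  · rw [Finset.sum_product]
    simp only [← Finset.mul_sum]
    rw [aux_sum_sq_pairs]
    have hsub : ({i, j} : Finset (Fin n)) ⊆ Finset.univ := Finset.subset_univ _
    have hcard : (Finset.univ \ ({i, j} : Finset (Fin n))).card = n - 2 := by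
      rw [Finset.card_sdiff_of_subset hsub, Finset.card_univ, Fintype.card_fin,
        Finset.card_insert_of_notMem (by simpa using hij), Finset.card_singleton]
    have hs1 : ∑ k ∈ Finset.univ \ ({i, j} : Finset (Fin n)), (X k : MvPolynomial (Fin n) ℝ)
        = (∑ k : Fin n, X k) - X i - X j := by
      rw [Finset.sum_sdiff_eq_sub hsub, Finset.sum_pair hij]; ring
    have hs2 : ∑ k ∈ Finset.univ \ ({i, j} : Finset (Fin n)), (X k : MvPolynomial (Fin n) ℝ) ^ 2
        = (∑ k : Fin n, X k ^ 2) - X i ^ 2 - X j ^ 2 := by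
      rw [Finset.sum_sdiff_eq_sub hsub, Finset.sum_pair hij]; ring
    rw [hcard, hs1, hs2]
    have hn2 : ((n - 2 : ℕ) : MvPolynomial (Fin n) ℝ) = C ((n : ℝ)) - 2 := by
      rw [Nat.cast_sub (by omega : 2 ≤ n)]
      simp [map_natCast]
    rw [hn2]
    ring

end Aux

/-- For `n ≥ 4`:
`Sym_n((x_1 − x_2)^2 (x_3 − x_4)^2) = (8n³/((n−1)(n−2)(n−3))) ·
  ((1/2) p_{(1⁴)} − p_{(2,1,1)} + ((n²−3n+3)/(2n²)) p_{(2,2)}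
   + ((2n−2)/n²) p_{(3,1)} + ((1−n)/(2n²)) p_{(4)})`. -/
theorem symmetrize_sq_sq (n : ℕ) (hn : 4 ≤ n) :
    symmetrize n
        ((X (⟨0, by omega⟩ : Fin n) - X (⟨1, by omega⟩ : Fin n)) ^ 2 *
         (X (⟨2, by omega⟩ : Fin n) - X (⟨3, by omega⟩ : Fin n)) ^ 2) =
      C (8 * (n : ℝ) ^ 3 / (((n : ℝ) - 1) * ((n : ℝ) - 2) * ((n : ℝ) - 3))) *
        (C ((1 : ℝ) / 2) * psum n 1 ^ 4
          - psum n 2 * psum n 1 ^ 2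
          + C (((n : ℝ) ^ 2 - 3 * (n : ℝ) + 3) / (2 * (n : ℝ) ^ 2)) * psum n 2 ^ 2
          + C ((2 * (n : ℝ) - 2) / (n : ℝ) ^ 2) * (psum n 3 * psum n 1)
          + C ((1 - (n : ℝ)) / (2 * (n : ℝ) ^ 2)) * psum n 4) := by
  classical
  set a : Fin n := ⟨0, by omega⟩ with ha
  set b : Fin n := ⟨1, by omega⟩ with hb
  set c : Fin n := ⟨2, by omega⟩ with hc
  set d : Fin n := ⟨3, by omega⟩ with hd
  have hab : a ≠ b := by simp [ha, hb, Fin.ext_iff]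
  have hac : a ≠ c := by simp [ha, hc, Fin.ext_iff]
  have had : a ≠ d := by simp [ha, hd, Fin.ext_iff]
  have hbc : b ≠ c := by simp [hb, hc, Fin.ext_iff]
  have hbd : b ≠ d := by simp [hb, hd, Fin.ext_iff]
  have hcd : c ≠ d := by simp [hc, hd, Fin.ext_iff]
  rw [symmetrize]
  have hren : ∀ σ : Equiv.Perm (Fin n),
      rename (⇑σ) ((X a - X b) ^ 2 * ((X c : MvPolynomial (Fin n) ℝ) - X d) ^ 2)
        = (X (σ a) - X (σ b)) ^ 2 * ((X (σ c) : MvPolynomial (Fin n) ℝ) - X (σ d)) ^ 2 := by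
    intro σ
    simp only [map_mul, map_pow, map_sub, rename_X]
  rw [Finset.sum_congr rfl (fun σ _ => hren σ)]
  -- group the sum over permutations into fibers over the tuple of images
  set Q : Finset ((Fin n × Fin n) × Fin n × Fin n) :=
    Finset.univ.filter (fun t : (Fin n × Fin n) × Fin n × Fin n =>
        t.1.1 ≠ t.1.2 ∧ t.1.1 ≠ t.2.1 ∧ t.1.1 ≠ t.2.2 ∧ t.1.2 ≠ t.2.1 ∧ t.1.2 ≠ t.2.2
          ∧ t.2.1 ≠ t.2.2) with hQ
  have hmaps : ∀ σ ∈ (Finset.univ : Finset (Equiv.Perm (Fin n))),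
      (((σ a, σ b), (σ c, σ d)) : (Fin n × Fin n) × Fin n × Fin n) ∈ Q := by
    intro σ _
    simp only [hQ, Finset.mem_filter, Finset.mem_univ, true_and]
    exact ⟨σ.injective.ne hab, σ.injective.ne hac, σ.injective.ne had,
      σ.injective.ne hbc, σ.injective.ne hbd, σ.injective.ne hcd⟩
  have hB : ∑ σ : Equiv.Perm (Fin n),
      ((X (σ a) - X (σ b)) ^ 2 * ((X (σ c) : MvPolynomial (Fin n) ℝ) - X (σ d)) ^ 2)
      = (n - 4).factorial •
        ∑ t ∈ Q, ((X t.1.1 - X t.1.2 : MvPolynomial (Fin n) ℝ) ^ 2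
          * (X t.2.1 - X t.2.2) ^ 2) := by
    rw [← Finset.sum_fiberwise_of_maps_to hmaps
      (fun σ => ((X (σ a) - X (σ b)) ^ 2
        * ((X (σ c) : MvPolynomial (Fin n) ℝ) - X (σ d)) ^ 2))]
    rw [Finset.smul_sum]
    refine Finset.sum_congr rfl (fun t ht => ?_)
    simp only [hQ, Finset.mem_filter, Finset.mem_univ, true_and] at ht
    obtain ⟨h12, h13, h14, h23, h24, h34⟩ := ht
    have hfib : ∀ σ ∈ Finset.univ.filter (fun σ : Equiv.Perm (Fin n) =>
        (((σ a, σ b), (σ c, σ d)) : (Fin n × Fin n) × Fin n × Fin n) = t),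
        ((X (σ a) - X (σ b)) ^ 2 * ((X (σ c) : MvPolynomial (Fin n) ℝ) - X (σ d)) ^ 2)
          = ((X t.1.1 - X t.1.2 : MvPolynomial (Fin n) ℝ) ^ 2 * (X t.2.1 - X t.2.2) ^ 2) := by
      intro σ hσ
      simp only [Finset.mem_filter, Finset.mem_univ, true_and, Prod.ext_iff] at hσ
      obtain ⟨⟨g1, g2⟩, g3, g4⟩ := hσ
      rw [g1, g2, g3, g4]
    rw [Finset.sum_congr rfl hfib, Finset.sum_const]
    congr 1
    have heq : (Finset.univ.filter (fun σ : Equiv.Perm (Fin n) =>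
        (((σ a, σ b), (σ c, σ d)) : (Fin n × Fin n) × Fin n × Fin n) = t))
        = Finset.univ.filter (fun σ : Equiv.Perm (Fin n) =>
          σ a = t.1.1 ∧ σ b = t.1.2 ∧ σ c = t.2.1 ∧ σ d = t.2.2) := by
      apply Finset.filter_congr
      intro σ _
      simp [Prod.ext_iff, and_assoc]
    rw [heq]
    exact aux_card_fiber_four n hab hac had hbc hbd hcd h12 h13 h14 h23 h24 h34
  rw [hB, hQ, aux_sum_Q n hn, aux_bigsum n]
  -- final numeric assembly
  rw [nsmul_eq_mul, ← map_natCast (C : ℝ →+* MvPolynomial (Fin n) ℝ) (n - 4).factorial]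
  simp only [_root_.psum]
  simp only [pow_one]
  set A : MvPolynomial (Fin n) ℝ := C ((n.factorial : ℝ)⁻¹) with hA
  set B : MvPolynomial (Fin n) ℝ := C (((n - 4).factorial : ℝ)) with hB2
  set Cn : MvPolynomial (Fin n) ℝ := C ((n : ℝ)) with hCn
  set G : MvPolynomial (Fin n) ℝ :=
    C (8 * (n : ℝ) ^ 3 / (((n : ℝ) - 1) * ((n : ℝ) - 2) * ((n : ℝ) - 3))) with hG
  set H2 : MvPolynomial (Fin n) ℝ := C ((1 : ℝ) / 2) with hH2
  set H3 : MvPolynomial (Fin n) ℝ :=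
    C (((n : ℝ) ^ 2 - 3 * (n : ℝ) + 3) / (2 * (n : ℝ) ^ 2)) with hH3
  set H4 : MvPolynomial (Fin n) ℝ := C ((2 * (n : ℝ) - 2) / (n : ℝ) ^ 2) with hH4
  set H5 : MvPolynomial (Fin n) ℝ := C ((1 - (n : ℝ)) / (2 * (n : ℝ) ^ 2)) with hH5
  set P : MvPolynomial (Fin n) ℝ := C ((n : ℝ)⁻¹) with hP
  set S1 : MvPolynomial (Fin n) ℝ := ∑ k : Fin n, X k with hS1
  set S2 : MvPolynomial (Fin n) ℝ := ∑ k : Fin n, X k ^ 2 with hS2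
  set S3 : MvPolynomial (Fin n) ℝ := ∑ k : Fin n, X k ^ 3 with hS3
  set S4 : MvPolynomial (Fin n) ℝ := ∑ k : Fin n, X k ^ 4 with hS4
  -- real-number facts
  have h4r : (4 : ℝ) ≤ (n : ℝ) := by exact_mod_cast hn
  have hfac : (n.factorial : ℝ)
      = (n : ℝ) * ((n : ℝ) - 1) * ((n : ℝ) - 2) * ((n : ℝ) - 3) * (((n - 4).factorial : ℕ) : ℝ) := by
    obtain ⟨m, hm⟩ := Nat.exists_eq_add_of_le hn
    rw [hm, show 4 + m = m + 4 from by omega]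
    simp only [Nat.add_sub_cancel, Nat.factorial_succ]
    push_cast
    ring
  have hfacne : (n.factorial : ℝ) ≠ 0 := Nat.cast_ne_zero.mpr n.factorial_ne_zero
  have hne0 : (n : ℝ) ≠ 0 := by linarith
  have hne1 : (n : ℝ) - 1 ≠ 0 := by linarith
  have hne2 : (n : ℝ) - 2 ≠ 0 := by linarith
  have hne3 : (n : ℝ) - 3 ≠ 0 := by linarith
  have key : ∀ r s : ℝ, r = s → (C r : MvPolynomial (Fin n) ℝ) = C s := fun r s h => by rw [h]
  have e1 : A * B * 4 = G * H2 * P ^ 4 := by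
    simp only [hA, hB2, hG, hH2, hH3, hH4, hH5, hP, hCn,
      show ((4 : MvPolynomial (Fin n) ℝ)) = C (4 : ℝ) from (map_ofNat _ _).symm,
      show ((8 : MvPolynomial (Fin n) ℝ)) = C (8 : ℝ) from (map_ofNat _ _).symm,
      show ((12 : MvPolynomial (Fin n) ℝ)) = C (12 : ℝ) from (map_ofNat _ _).symm,
      show ((16 : MvPolynomial (Fin n) ℝ)) = C (16 : ℝ) from (map_ofNat _ _).symm,
      ← map_mul, ← map_pow, ← map_sub, ← map_add]
    apply key
    rw [hfac]
    field_simp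
    ring
  have e2 : A * B * (Cn * 8) = G * P ^ 3 := by
    simp only [hA, hB2, hG, hH2, hH3, hH4, hH5, hP, hCn,
      show ((4 : MvPolynomial (Fin n) ℝ)) = C (4 : ℝ) from (map_ofNat _ _).symm,
      show ((8 : MvPolynomial (Fin n) ℝ)) = C (8 : ℝ) from (map_ofNat _ _).symm,
      show ((12 : MvPolynomial (Fin n) ℝ)) = C (12 : ℝ) from (map_ofNat _ _).symm,
      show ((16 : MvPolynomial (Fin n) ℝ)) = C (16 : ℝ) from (map_ofNat _ _).symm,
      ← map_mul, ← map_pow, ← map_sub, ← map_add]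
    apply key
    rw [hfac]
    field_simp
  have e3 : A * B * (Cn ^ 2 * 4 - Cn * 12 + 12) = G * H3 * P ^ 2 := by
    simp only [hA, hB2, hG, hH2, hH3, hH4, hH5, hP, hCn,
      show ((4 : MvPolynomial (Fin n) ℝ)) = C (4 : ℝ) from (map_ofNat _ _).symm,
      show ((8 : MvPolynomial (Fin n) ℝ)) = C (8 : ℝ) from (map_ofNat _ _).symm,
      show ((12 : MvPolynomial (Fin n) ℝ)) = C (12 : ℝ) from (map_ofNat _ _).symm,
      show ((16 : MvPolynomial (Fin n) ℝ)) = C (16 : ℝ) from (map_ofNat _ _).symm,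
      ← map_mul, ← map_pow, ← map_sub, ← map_add]
    apply key
    rw [hfac]
    field_simp
    ring
  have e4 : A * B * (Cn * 16 - 16) = G * H4 * P ^ 2 := by
    simp only [hA, hB2, hG, hH2, hH3, hH4, hH5, hP, hCn,
      show ((4 : MvPolynomial (Fin n) ℝ)) = C (4 : ℝ) from (map_ofNat _ _).symm,
      show ((8 : MvPolynomial (Fin n) ℝ)) = C (8 : ℝ) from (map_ofNat _ _).symm,
      show ((12 : MvPolynomial (Fin n) ℝ)) = C (12 : ℝ) from (map_ofNat _ _).symm,
      show ((16 : MvPolynomial (Fin n) ℝ)) = C (16 : ℝ) from (map_ofNat _ _).symm,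
      ← map_mul, ← map_pow, ← map_sub, ← map_add]
    apply key
    rw [hfac]
    field_simp
    ring
  have e5 : A * B * (Cn * 4 - Cn ^ 2 * 4) = G * H5 * P := by
    simp only [hA, hB2, hG, hH2, hH3, hH4, hH5, hP, hCn,
      show ((4 : MvPolynomial (Fin n) ℝ)) = C (4 : ℝ) from (map_ofNat _ _).symm,
      show ((8 : MvPolynomial (Fin n) ℝ)) = C (8 : ℝ) from (map_ofNat _ _).symm,
      show ((12 : MvPolynomial (Fin n) ℝ)) = C (12 : ℝ) from (map_ofNat _ _).symm,
      show ((16 : MvPolynomial (Fin n) ℝ)) = C (16 : ℝ) from (map_ofNat _ _).symm,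
      ← map_mul, ← map_pow, ← map_sub, ← map_add]
    apply key
    rw [hfac]
    field_simp
    ring
  linear_combination e1 * S1 ^ 4 - e2 * (S2 * S1 ^ 2) + e3 * S2 ^ 2 + e4 * (S3 * S1) + e5 * S4
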